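/- Let a ≥ 0 and define N_a = {(z₁,z₂,z₃) ∈ ℂ³ : |z₁|² − 2a = |z₂|² = |z₃|², Im(z₁z₂z₃) = 0, Re(z₁z₂z₃) ≥ 0}. Then ω restricted to the tangent space of N_a vanishes at every smooth point of N_a, where ω = (i/2)(dz₁∧dz̄₁ + dz₂∧dz̄₂ + dz₃∧dz̄₃) is the standard Kähler form on ℂ³; i.e. N_a is Lagrangian at its smooth points. -/

import Mathlib

open Complex

/-- The standard Kähler form ω = (i/2)∑ dzⱼ∧dz̄ⱼ of ℂ³, evaluated on a pair of
tangent vectors: ω(w,z) = ∑ⱼ Im(w̄ⱼ zⱼ). -/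
noncomputable def stdKahlerForm (w z : ℂ × ℂ × ℂ) : ℝ :=
  ((starRingEnd ℂ w.1) * z.1 + (starRingEnd ℂ w.2.1) * z.2.1
    + (starRingEnd ℂ w.2.2) * z.2.2).im

/-- The Harvey–Lawson U(1)²-invariant set N_a ⊂ ℂ³. -/
def HLset (a : ℝ) : Set (ℂ × ℂ × ℂ) :=
  {p | ‖p.1‖ ^ 2 - 2 * a = ‖p.2.1‖ ^ 2 ∧
       ‖p.2.1‖ ^ 2 = ‖p.2.2‖ ^ 2 ∧
       (p.1 * p.2.1 * p.2.2).im = 0 ∧ 0 ≤ (p.1 * p.2.1 * p.2.2).re}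

open Filter Topology

lemma conj_mul_self' (p : ℂ) : starRingEnd ℂ p * p = (Complex.normSq p : ℂ) := by
  rw [mul_comm, Complex.mul_conj]

lemma key_re (p α : ℂ) : (starRingEnd ℂ p * (p * α)).re = Complex.normSq p * α.re := by
  rw [← mul_assoc, conj_mul_self']
  simp [Complex.mul_re]

lemma key_im (p α β : ℂ) :
    (starRingEnd ℂ (p * α) * (p * β)).im
      = Complex.normSq p * (starRingEnd ℂ α * β).im := by
  simp [Complex.mul_im, Complex.mul_re, Complex.normSq_apply]
  ring

lemma case1 (p₁ p₂ p₃ w₁ w₂ w₃ z₁ z₂ z₃ : ℂ)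
    (h₁ : p₁ ≠ 0) (h₂ : p₂ ≠ 0) (h₃ : p₃ ≠ 0)
    (hP : (p₁*p₂*p₃).im = 0)
    (hw12 : (starRingEnd ℂ p₁ * w₁).re = (starRingEnd ℂ p₂ * w₂).re)
    (hw23 : (starRingEnd ℂ p₂ * w₂).re = (starRingEnd ℂ p₃ * w₃).re)
    (hz12 : (starRingEnd ℂ p₁ * z₁).re = (starRingEnd ℂ p₂ * z₂).re)
    (hz23 : (starRingEnd ℂ p₂ * z₂).re = (starRingEnd ℂ p₃ * z₃).re)
    (hwB : (w₁*p₂*p₃ + p₁*w₂*p₃ + p₁*p₂*w₃).im = 0)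
    (hzB : (z₁*p₂*p₃ + p₁*z₂*p₃ + p₁*p₂*z₃).im = 0) :
    (starRingEnd ℂ w₁ * z₁ + starRingEnd ℂ w₂ * z₂ + starRingEnd ℂ w₃ * z₃).im = 0 := by
  have ew₁ : w₁ = p₁ * (w₁ / p₁) := by field_simp
  have ew₂ : w₂ = p₂ * (w₂ / p₂) := by field_simp
  have ew₃ : w₃ = p₃ * (w₃ / p₃) := by field_simp
  have ez₁ : z₁ = p₁ * (z₁ / p₁) := by field_simp
  have ez₂ : z₂ = p₂ * (z₂ / p₂) := by field_simp
  have ez₃ : z₃ = p₃ * (z₃ / p₃) := by field_simp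
  have hPre : (p₁*p₂*p₃).re ≠ 0 := by
    intro h
    have : p₁*p₂*p₃ = 0 := by apply Complex.ext <;> simp [h, hP]
    simp [mul_eq_zero, h₁, h₂, h₃] at this
  rw [ew₁] at hw12 ⊢
  rw [ew₂] at hw12 hw23
  rw [ew₂]
  rw [ew₃] at hw23 ⊢
  rw [ez₁] at hz12 ⊢
  rw [ez₂] at hz12 hz23
  rw [ez₂]
  rw [ez₃] at hz23 ⊢
  rw [ew₁, ew₂, ew₃] at hwB
  rw [ez₁, ez₂, ez₃] at hzB
  generalize w₁ / p₁ = α₁ at *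
  generalize w₂ / p₂ = α₂ at *
  generalize w₃ / p₃ = α₃ at *
  generalize z₁ / p₁ = β₁ at *
  generalize z₂ / p₂ = β₂ at *
  generalize z₃ / p₃ = β₃ at *
  have ewB : p₁ * α₁ * p₂ * p₃ + p₁ * (p₂ * α₂) * p₃ + p₁ * p₂ * (p₃ * α₃)
      = (p₁*p₂*p₃) * (α₁+α₂+α₃) := by ring
  have ezB : p₁ * β₁ * p₂ * p₃ + p₁ * (p₂ * β₂) * p₃ + p₁ * p₂ * (p₃ * β₃)
      = (p₁*p₂*p₃) * (β₁+β₂+β₃) := by ring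
  rw [ewB, Complex.mul_im, hP] at hwB
  rw [ezB, Complex.mul_im, hP] at hzB
  simp only [zero_mul, add_zero, mul_eq_zero, Complex.add_im] at hwB hzB
  have hwB' : α₁.im + α₂.im + α₃.im = 0 := by tauto
  have hzB' : β₁.im + β₂.im + β₃.im = 0 := by tauto
  rw [key_re, key_re] at hw12 hw23 hz12 hz23
  rw [Complex.add_im, Complex.add_im, key_im, key_im, key_im]
  have e1 : ∀ α β : ℂ, (starRingEnd ℂ α * β).im = α.re * β.im - α.im * β.re := by
    intro α β; simp [Complex.mul_im]; ring
  rw [e1, e1, e1]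
  linear_combination (Complex.normSq p₁ * α₁.re) * hzB'
    - β₂.im * hw12 - β₃.im * hw12 - β₃.im * hw23
    - (Complex.normSq p₁ * β₁.re) * hwB'
    + α₂.im * hz12 + α₃.im * hz12 + α₃.im * hz23

lemma conj_of_abs_im_re {A B : ℂ} (hab : ‖A‖ = ‖B‖)
    (him : (A*B).im = 0) (hre : 0 ≤ (A*B).re) : B = starRingEnd ℂ A := by
  have hAB : A * B = ((A*B).re : ℂ) := by
    apply Complex.ext <;> simp [him]
  have habs : (A*B).re = ‖A‖ ^ 2 := by
    have h1 : ‖A*B‖ = ‖A‖ ^ 2 := by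
      rw [norm_mul, ← hab, sq]
    have h2 : ‖A*B‖ = |(A*B).re| := by
      nth_rewrite 1 [hAB]
      rw [Complex.norm_real, Real.norm_eq_abs]
    rw [← h1, h2, _root_.abs_of_nonneg hre]
  have hA2 : A * B = A * starRingEnd ℂ A := by
    rw [hAB, habs, Complex.mul_conj, Complex.normSq_eq_norm_sq]
  rcases eq_or_ne A 0 with h0 | h0
  · have hB : ‖B‖ = 0 := by rw [← hab, h0]; simp
    rw [norm_eq_zero] at hB
    rw [hB, h0]; simp
  · exact mul_left_cancel₀ h0 hA2

lemma case2 (q w₁ w₂ w₃ z₁ z₂ z₃ : ℂ) (hq : q ≠ 0)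
    (hw1 : (starRingEnd ℂ q * w₁).re = 0) (hz1 : (starRingEnd ℂ q * z₁).re = 0)
    (hwabs : ‖w₂‖ = ‖w₃‖) (hzabs : ‖z₂‖ = ‖z₃‖)
    (hwim : (q*w₂*w₃).im = 0) (hwre : 0 ≤ (q*w₂*w₃).re)
    (hzim : (q*z₂*z₃).im = 0) (hzre : 0 ≤ (q*z₂*z₃).re) :
    (starRingEnd ℂ w₁ * z₁ + starRingEnd ℂ w₂ * z₂ + starRingEnd ℂ w₃ * z₃).im = 0 := by
  have hnq : Complex.normSq q ≠ 0 := by simpa using hq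
  -- first coordinate
  have h1 : (starRingEnd ℂ w₁ * z₁).im = 0 := by
    have key : (starRingEnd ℂ (starRingEnd ℂ q * w₁) * (starRingEnd ℂ q * z₁)).im
        = Complex.normSq q * (starRingEnd ℂ w₁ * z₁).im := by
      simp [Complex.mul_im, Complex.mul_re, Complex.normSq_apply]
      ring
    have e1 : ∀ u v : ℂ, (starRingEnd ℂ u * v).im = u.re * v.im - u.im * v.re := by
      intro u v; simp [Complex.mul_im]; ring
    have lhs0 : (starRingEnd ℂ (starRingEnd ℂ q * w₁) * (starRingEnd ℂ q * z₁)).im = 0 := by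
      rw [e1, hw1, hz1]; ring
    rw [lhs0] at key
    exact (mul_eq_zero.1 key.symm).resolve_left hnq
  -- second/third coordinates
  set A := starRingEnd ℂ w₂ * z₂ with hA
  set B := starRingEnd ℂ w₃ * z₃ with hB
  have hw : q * w₂ * w₃ = ((q*w₂*w₃).re : ℂ) := by apply Complex.ext <;> simp [hwim]
  have hz : q * z₂ * z₃ = ((q*z₂*z₃).re : ℂ) := by apply Complex.ext <;> simp [hzim]
  have hABkey : (Complex.normSq q : ℂ) * (A * B)
      = starRingEnd ℂ (q*w₂*w₃) * (q*z₂*z₃) := by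
    rw [hA, hB, ← Complex.mul_conj]
    simp only [map_mul]
    ring
  have hABreal : (Complex.normSq q : ℂ) * (A * B)
      = (((q*w₂*w₃).re * (q*z₂*z₃).re : ℝ) : ℂ) := by
    rw [hABkey, hw, hz]
    push_cast
    simp
  have hABim : (A*B).im = 0 := by
    have h := congrArg Complex.im hABreal
    rw [Complex.im_ofReal_mul, Complex.ofReal_im] at h
    exact (mul_eq_zero.1 h).resolve_left hnq
  have hABre : 0 ≤ (A*B).re := by
    have h := congrArg Complex.re hABreal
    rw [Complex.re_ofReal_mul, Complex.ofReal_re] at h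
    nlinarith [mul_nonneg hwre hzre, Complex.normSq_pos.2 hq]
  have hab : ‖A‖ = ‖B‖ := by
    rw [hA, hB]
    simp only [norm_mul, Complex.norm_conj]
    rw [hwabs, hzabs]
  have hBA := conj_of_abs_im_re hab hABim hABre
  rw [Complex.add_im, Complex.add_im, h1, hBA]
  simp


/-- rescaled increment of `|·|²` converges to `2 Re(q̄ u)`. -/
lemma lim_normSq {c : ℕ → ℝ} {e : ℕ → ℂ} {u : ℂ} (q : ℂ)
    (hce : Tendsto (fun n => (c n : ℂ) * e n) atTop (𝓝 u))
    (he : Tendsto e atTop (𝓝 0)) :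
    Tendsto (fun n => c n * (‖q + e n‖ ^ 2 - ‖q‖ ^ 2)) atTop
      (𝓝 (2 * (starRingEnd ℂ q * u).re)) := by
  have hT : Tendsto
      (fun n => (starRingEnd ℂ q * ((c n : ℂ) * e n)
        + starRingEnd ℂ ((c n : ℂ) * e n) * (q + e n)).re) atTop
      (𝓝 ((starRingEnd ℂ q * u + starRingEnd ℂ u * (q + 0)).re)) := by
    apply (Complex.continuous_re.tendsto _).comp
    exact ((tendsto_const_nhds.mul hce).add
      (((RCLike.continuous_conj.tendsto _).comp hce).mul
        (tendsto_const_nhds.add he)))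
  have hval : (starRingEnd ℂ q * u + starRingEnd ℂ u * (q + 0)).re
      = 2 * (starRingEnd ℂ q * u).re := by
    simp [Complex.add_re, Complex.mul_re]
    ring
  rw [hval] at hT
  apply hT.congr
  intro n
  simp only [Complex.sq_norm, Complex.normSq_apply, Complex.add_re, Complex.add_im,
    Complex.mul_re, Complex.mul_im, Complex.conj_re, Complex.conj_im,
    Complex.ofReal_re, Complex.ofReal_im]
  ring

lemma hl_tangent_facts {a : ℝ} {p : ℂ × ℂ × ℂ} (hp : p ∈ HLset a) {w : ℂ × ℂ × ℂ}
    (hw : w ∈ tangentConeAt ℝ (HLset a) p) :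
    (starRingEnd ℂ p.1 * w.1).re = (starRingEnd ℂ p.2.1 * w.2.1).re ∧
    (starRingEnd ℂ p.2.1 * w.2.1).re = (starRingEnd ℂ p.2.2 * w.2.2).re ∧
    (w.1 * p.2.1 * p.2.2 + p.1 * w.2.1 * p.2.2 + p.1 * p.2.1 * w.2.2).im = 0 ∧
    (p.2.1 = 0 → p.2.2 = 0 →
      ‖w.2.1‖ = ‖w.2.2‖ ∧ (p.1 * w.2.1 * w.2.2).im = 0 ∧
      0 ≤ (p.1 * w.2.1 * w.2.2).re) := by
  obtain ⟨c, d, hd0, hmem, hcd⟩ := mem_tangentConeAt_iff_exists_seq.1 hw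
  have hd1 : Tendsto (fun n => (d n).1) atTop (𝓝 0) := by
    simpa [Function.comp_def] using (continuous_fst.tendsto _).comp hd0
  have hd2 : Tendsto (fun n => (d n).2.1) atTop (𝓝 0) := by
    simpa [Function.comp_def] using ((continuous_fst.comp continuous_snd).tendsto _).comp hd0
  have hd3 : Tendsto (fun n => (d n).2.2) atTop (𝓝 0) := by
    simpa [Function.comp_def] using ((continuous_snd.comp continuous_snd).tendsto _).comp hd0
  have hcd1 : Tendsto (fun n => (c n : ℂ) * (d n).1) atTop (𝓝 w.1) := by
    have := (continuous_fst.tendsto _).comp hcd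
    apply this.congr
    intro n
    simp [Complex.real_smul]
  have hcd2 : Tendsto (fun n => (c n : ℂ) * (d n).2.1) atTop (𝓝 w.2.1) := by
    have := ((continuous_fst.comp continuous_snd).tendsto _).comp hcd
    apply this.congr
    intro n
    simp [Complex.real_smul]
  have hcd3 : Tendsto (fun n => (c n : ℂ) * (d n).2.2) atTop (𝓝 w.2.2) := by
    have := ((continuous_snd.comp continuous_snd).tendsto _).comp hcd
    apply this.congr
    intro n
    simp [Complex.real_smul]
  -- the three first-order constraints
  have l1 := lim_normSq p.1 hcd1 hd1
  have l2 := lim_normSq p.2.1 hcd2 hd2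
  have l3 := lim_normSq p.2.2 hcd3 hd3
  have ev12 : (fun n => c n * (‖p.1 + (d n).1‖ ^ 2 - ‖p.1‖ ^ 2))
      =ᶠ[atTop] (fun n => c n * (‖p.2.1 + (d n).2.1‖ ^ 2 - ‖p.2.1‖ ^ 2)) := by
    filter_upwards [hmem] with n hn
    obtain ⟨h1, h2, -, -⟩ := hn
    simp only [Prod.fst_add, Prod.snd_add] at h1 h2
    linear_combination c n * h1 - c n * hp.1
  have ev23 : (fun n => c n * (‖p.2.1 + (d n).2.1‖ ^ 2 - ‖p.2.1‖ ^ 2))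
      =ᶠ[atTop] (fun n => c n * (‖p.2.2 + (d n).2.2‖ ^ 2 - ‖p.2.2‖ ^ 2)) := by
    filter_upwards [hmem] with n hn
    obtain ⟨-, h2, -, -⟩ := hn
    simp only [Prod.fst_add, Prod.snd_add] at h2
    linear_combination c n * h2 - c n * hp.2.1
  have fA1 : (starRingEnd ℂ p.1 * w.1).re = (starRingEnd ℂ p.2.1 * w.2.1).re := by
    have := tendsto_nhds_unique (l1.congr' ev12) l2
    linarith
  have fA2 : (starRingEnd ℂ p.2.1 * w.2.1).re = (starRingEnd ℂ p.2.2 * w.2.2).re := by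
    have := tendsto_nhds_unique (l2.congr' ev23) l3
    linarith
  refine ⟨fA1, fA2, ?_, ?_⟩
  · -- the cubic constraint, first order
    set P := p.1 * p.2.1 * p.2.2 with hPdef
    have hTB : Tendsto (fun n => ((c n : ℂ) *
        ((p.1 + (d n).1) * (p.2.1 + (d n).2.1) * (p.2.2 + (d n).2.2) - P)).im) atTop
        (𝓝 ((w.1 * p.2.1 * p.2.2 + p.1 * w.2.1 * p.2.2 + p.1 * p.2.1 * w.2.2).im)) := by
      have hmain : Tendsto (fun n =>
          ((c n : ℂ) * (d n).1) * p.2.1 * p.2.2 + p.1 * ((c n : ℂ) * (d n).2.1) * p.2.2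
          + p.1 * p.2.1 * ((c n : ℂ) * (d n).2.2)
          + ((c n : ℂ) * (d n).1) * (d n).2.1 * p.2.2
          + ((c n : ℂ) * (d n).1) * p.2.1 * (d n).2.2
          + p.1 * ((c n : ℂ) * (d n).2.1) * (d n).2.2
          + ((c n : ℂ) * (d n).1) * (d n).2.1 * (d n).2.2) atTop
          (𝓝 (w.1 * p.2.1 * p.2.2 + p.1 * w.2.1 * p.2.2 + p.1 * p.2.1 * w.2.2
            + w.1 * 0 * p.2.2 + w.1 * p.2.1 * 0 + p.1 * w.2.1 * 0 + w.1 * 0 * 0)) := by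
        exact ((((((hcd1.mul tendsto_const_nhds).mul tendsto_const_nhds).add
          ((tendsto_const_nhds.mul hcd2).mul tendsto_const_nhds)).add
          ((tendsto_const_nhds.mul tendsto_const_nhds).mul hcd3)).add
          (((hcd1.mul hd2)).mul tendsto_const_nhds)).add
          ((hcd1.mul tendsto_const_nhds).mul hd3)).add
          ((tendsto_const_nhds.mul hcd2).mul hd3) |>.add ((hcd1.mul hd2).mul hd3)
      have hmain' := (Complex.continuous_im.tendsto _).comp hmain
      simp only [mul_zero, zero_mul, add_zero] at hmain'
      apply hmain'.congr
      intro n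
      simp only [Function.comp_apply]
      exact congrArg Complex.im (by rw [hPdef]; ring)
    have hev0 : (fun n => ((c n : ℂ) *
        ((p.1 + (d n).1) * (p.2.1 + (d n).2.1) * (p.2.2 + (d n).2.2) - P)).im)
        =ᶠ[atTop] (fun _ => (0 : ℝ)) := by
      filter_upwards [hmem] with n hn
      obtain ⟨-, -, h3, -⟩ := hn
      simp only [Prod.fst_add, Prod.snd_add] at h3
      rw [Complex.im_ofReal_mul, Complex.sub_im, h3, hPdef, hp.2.2.1]
      ring
    exact tendsto_nhds_unique (Filter.Tendsto.congr' hev0 hTB) tendsto_const_nhds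
  · intro h21 h22
    refine ⟨?_, ?_, ?_⟩
    · have labs1 : Tendsto (fun n => ‖(c n : ℂ) * (d n).2.1‖) atTop
          (𝓝 (‖w.2.1‖)) := (continuous_norm.tendsto _).comp hcd2
      have labs2 : Tendsto (fun n => ‖(c n : ℂ) * (d n).2.2‖) atTop
          (𝓝 (‖w.2.2‖)) := (continuous_norm.tendsto _).comp hcd3
      have hev : (fun n => ‖(c n : ℂ) * (d n).2.1‖)
          =ᶠ[atTop] (fun n => ‖(c n : ℂ) * (d n).2.2‖) := by
        filter_upwards [hmem] with n hn
        obtain ⟨-, h2, -, -⟩ := hn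
        simp only [Prod.fst_add, Prod.snd_add, h21, h22, zero_add] at h2
        have habs : ‖(d n).2.1‖ = ‖(d n).2.2‖ := by
          have h := congrArg Real.sqrt h2
          rwa [Real.sqrt_sq (norm_nonneg _), Real.sqrt_sq (norm_nonneg _)] at h
        rw [norm_mul, norm_mul, habs]
      exact tendsto_nhds_unique (Filter.Tendsto.congr' hev labs1) labs2
    · have hprod : Tendsto (fun n => (p.1 + (d n).1) * ((c n : ℂ) * (d n).2.1)
          * ((c n : ℂ) * (d n).2.2)) atTop (𝓝 ((p.1 + 0) * w.2.1 * w.2.2)) :=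
        ((tendsto_const_nhds.add hd1).mul hcd2).mul hcd3
      rw [add_zero] at hprod
      have hprodim := (Complex.continuous_im.tendsto _).comp hprod
      have hev : (fun n => ((p.1 + (d n).1) * ((c n : ℂ) * (d n).2.1)
          * ((c n : ℂ) * (d n).2.2)).im) =ᶠ[atTop] (fun _ => (0 : ℝ)) := by
        filter_upwards [hmem] with n hn
        obtain ⟨-, -, h3, -⟩ := hn
        simp only [Prod.fst_add, Prod.snd_add, h21, h22, zero_add] at h3
        have hkey : (p.1 + (d n).1) * ((c n : ℂ) * (d n).2.1) * ((c n : ℂ) * (d n).2.2)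
            = ((c n ^ 2 : ℝ) : ℂ) * ((p.1 + (d n).1) * (d n).2.1 * (d n).2.2) := by
          push_cast; ring
        rw [hkey, Complex.im_ofReal_mul, h3, mul_zero]
      exact tendsto_nhds_unique (Filter.Tendsto.congr' hev hprodim) tendsto_const_nhds
    · have hprod : Tendsto (fun n => (p.1 + (d n).1) * ((c n : ℂ) * (d n).2.1)
          * ((c n : ℂ) * (d n).2.2)) atTop (𝓝 ((p.1 + 0) * w.2.1 * w.2.2)) :=
        ((tendsto_const_nhds.add hd1).mul hcd2).mul hcd3
      rw [add_zero] at hprod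
      have hprodre := (Complex.continuous_re.tendsto _).comp hprod
      apply ge_of_tendsto hprodre
      filter_upwards [hmem] with n hn
      obtain ⟨-, -, -, h4⟩ := hn
      simp only [Prod.fst_add, Prod.snd_add, h21, h22, zero_add] at h4
      show (0 : ℝ) ≤ _
      simp only [Function.comp_apply]
      have hkey : (p.1 + (d n).1) * ((c n : ℂ) * (d n).2.1) * ((c n : ℂ) * (d n).2.2)
          = ((c n ^ 2 : ℝ) : ℂ) * ((p.1 + (d n).1) * (d n).2.1 * (d n).2.2) := by
        push_cast; ring
      rw [hkey, Complex.re_ofReal_mul]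
      exact mul_nonneg (sq_nonneg _) h4


theorem stmt8 (a : ℝ) (ha : 0 ≤ a) :
    ∀ p ∈ HLset a, p ≠ 0 →
      ∀ w ∈ tangentConeAt ℝ (HLset a) p, ∀ z ∈ tangentConeAt ℝ (HLset a) p,
        stdKahlerForm w z = 0 := by
  intro p hp hp0 w hw z hz
  obtain ⟨fw1, fw2, fw3, fwq⟩ := hl_tangent_facts hp hw
  obtain ⟨fz1, fz2, fz3, fzq⟩ := hl_tangent_facts hp hz
  unfold stdKahlerForm
  by_cases h21 : p.2.1 = 0
  · have h22 : p.2.2 = 0 := by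
      have h := hp.2.1
      rw [h21] at h
      simp only [norm_zero] at h
      have : ‖p.2.2‖ = 0 := by nlinarith [norm_nonneg p.2.2]
      rwa [norm_eq_zero] at this
    have h1ne : p.1 ≠ 0 := by
      intro h
      apply hp0
      rw [Prod.ext_iff, Prod.ext_iff]
      exact ⟨h, h21, h22⟩
    obtain ⟨hwabs, hwim, hwre⟩ := fwq h21 h22
    obtain ⟨hzabs, hzim, hzre⟩ := fzq h21 h22
    apply case2 p.1 w.1 w.2.1 w.2.2 z.1 z.2.1 z.2.2 h1ne _ _ hwabs hzabs hwim hwre hzim hzre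
    · rw [fw1, h21]; simp
    · rw [fz1, h21]; simp
  · have h22 : p.2.2 ≠ 0 := by
      intro h
      apply h21
      have hh := hp.2.1
      rw [h] at hh
      simp only [norm_zero] at hh
      have : ‖p.2.1‖ = 0 := by nlinarith [norm_nonneg p.2.1]
      rwa [norm_eq_zero] at this
    have h1ne : p.1 ≠ 0 := by
      intro h
      apply h21
      have hh := hp.1
      rw [h] at hh
      simp only [norm_zero] at hh
      have : ‖p.2.1‖ = 0 := by nlinarith [norm_nonneg p.2.1]
      rwa [norm_eq_zero] at this
    exact case1 p.1 p.2.1 p.2.2 w.1 w.2.1 w.2.2 z.1 z.2.1 z.2.2 h1ne h21 h22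
      hp.2.2.1 fw1 fw2 fz1 fz2 fw3 fz3
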